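/- Let R be a nonzero n×n real symmetric matrix with nonnegative entries, with spectral radius ρ (its largest eigenvalue) and nullity κ = η(R). Suppose there exist three distinct indices i, j, k such that R has zero diagonal entries at i, j, k and, setting a = R[i,j], b = R[j,k], c = R[i,k], there exist real numbers α, β, γ, not all zero, with 2(aαβ + bβγ + cαγ)/(α² + β² + γ²) < −1. Then the inequality is strict: E(R) > ρ + (n − κ − 1) + ln|Υ_{n−κ}(R)| − ln ρ. -/

import Mathlib

open Finset

/-- The energy of a Hermitian (real symmetric) matrix: the sum of the absolute
values of its eigenvalues. -/
noncomputable def Matrix.energy {n : ℕ} (R : Matrix (Fin n) (Fin n) ℝ)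
    (hR : R.IsHermitian) : ℝ :=
  ∑ i, |hR.eigenvalues i|

/-- The nullity of a Hermitian (real symmetric) matrix: the multiplicity of `0`
as an eigenvalue. -/
noncomputable def Matrix.nullityEig {n : ℕ} (R : Matrix (Fin n) (Fin n) ℝ)
    (hR : R.IsHermitian) : ℕ :=
  (Finset.univ.filter fun i => hR.eigenvalues i = 0).card

/-- `Υ_{n-κ}(R)`: the product of the nonzero eigenvalues of `R`, i.e. the
`(n-κ)`-th elementary symmetric function of the eigenvalues when `κ` is the
nullity. -/
noncomputable def Matrix.prodNonzeroEig {n : ℕ} (R : Matrix (Fin n) (Fin n) ℝ)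
    (hR : R.IsHermitian) : ℝ :=
  ∏ i ∈ Finset.univ.filter (fun i => hR.eigenvalues i ≠ 0), hR.eigenvalues i

open Matrix

private lemma quad_lower {n : ℕ} {A : Matrix (Fin n) (Fin n) ℝ} (hA : A.IsHermitian) {c : ℝ}
    (h : ∀ i, c ≤ hA.eigenvalues i) (v : Fin n → ℝ) :
    c * (v ⬝ᵥ v) ≤ v ⬝ᵥ (A *ᵥ v) := by
  set U : Matrix (Fin n) (Fin n) ℝ := (hA.eigenvectorUnitary : Matrix (Fin n) (Fin n) ℝ) with hU
  have hUT : Uᴴ = Uᵀ := by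
    ext p q; simp [Matrix.conjTranspose_apply]
  have hUU : U * Uᴴ = 1 := (Matrix.mem_unitaryGroup_iff).mp hA.eigenvectorUnitary.2
  set w : Fin n → ℝ := Uᴴ *ᵥ v with hw
  have hDiag : A = U * Matrix.diagonal hA.eigenvalues * Uᴴ := by
    have := hA.spectral_theorem
    simpa [Matrix.star_eq_conjTranspose] using this
  have hvv : v ⬝ᵥ v = w ⬝ᵥ w := by
    have h1 : w ⬝ᵥ w = (w ᵥ* Uᴴ) ⬝ᵥ v := by rw [hw, dotProduct_mulVec]
    have h2 : w ᵥ* Uᴴ = v := by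
      have hUTT : Uᴴᵀ = U := by rw [hUT, Matrix.transpose_transpose]
      rw [← Matrix.mulVec_transpose, hUTT, hw, Matrix.mulVec_mulVec, hUU, Matrix.one_mulVec]
    rw [h1, h2]
  have hAv : v ⬝ᵥ (A *ᵥ v) = ∑ p, hA.eigenvalues p * (w p)^2 := by
    conv_lhs => rw [hDiag]
    rw [← Matrix.mulVec_mulVec, ← Matrix.mulVec_mulVec, dotProduct_mulVec,
      ← Matrix.mulVec_transpose, ← hUT, ← hw]
    simp only [dotProduct]
    refine Finset.sum_congr rfl fun p _ => ?_
    rw [Matrix.mulVec_diagonal]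
    ring
  rw [hvv, hAv]
  have : c * (w ⬝ᵥ w) = ∑ p, c * (w p)^2 := by
    simp [dotProduct, Finset.mul_sum, sq]
  rw [this]
  exact Finset.sum_le_sum fun p _ =>
    mul_le_mul_of_nonneg_right (h p) (sq_nonneg _)

private lemma trace_eq_sum_eig {n : ℕ} {A : Matrix (Fin n) (Fin n) ℝ} (hA : A.IsHermitian) :
    A.trace = ∑ p, hA.eigenvalues p := by
  have hDiag : A = (hA.eigenvectorUnitary : Matrix (Fin n) (Fin n) ℝ) *
      Matrix.diagonal hA.eigenvalues * (hA.eigenvectorUnitary : Matrix (Fin n) (Fin n) ℝ)ᴴ := by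
    have := hA.spectral_theorem
    simpa [Matrix.star_eq_conjTranspose] using this
  have hUU : (hA.eigenvectorUnitary : Matrix (Fin n) (Fin n) ℝ)ᴴ *
      (hA.eigenvectorUnitary : Matrix (Fin n) (Fin n) ℝ) = 1 :=
    (Matrix.mem_unitaryGroup_iff').mp hA.eigenvectorUnitary.2
  conv_lhs => rw [hDiag]
  rw [Matrix.trace_mul_comm, ← Matrix.mul_assoc, hUU, Matrix.one_mul, Matrix.trace_diagonal]


theorem energy_strict_lower_bound_of_rayleigh_submatrix {n : ℕ}
    (R : Matrix (Fin n) (Fin n) ℝ) (hR : R.IsHermitian)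
    (hnonneg : ∀ i j, 0 ≤ R i j) (hR0 : R ≠ 0)
    (ρ : ℝ) (hρ : IsGreatest (Set.range hR.eigenvalues) ρ)
    (κ : ℕ) (hκ : κ = R.nullityEig hR)
    (i j k : Fin n) (hij : i ≠ j) (hjk : j ≠ k) (hik : i ≠ k)
    (hii : R i i = 0) (hjj : R j j = 0) (hkk : R k k = 0)
    (hray : ∃ α β γ : ℝ, (α, β, γ) ≠ (0, 0, 0) ∧
      2 * (R i j * α * β + R j k * β * γ + R i k * α * γ) /
        (α ^ 2 + β ^ 2 + γ ^ 2) < -1) :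
    R.energy hR >
      ρ + ((n : ℝ) - κ - 1) + Real.log |R.prodNonzeroEig hR| - Real.log ρ := by
  classical
  set ev := hR.eigenvalues with hev
  -- symmetry of entries
  have hsym : ∀ p q, R q p = R p q := by
    intro p q
    conv_lhs => rw [← hR]
    simp [Matrix.conjTranspose_apply]
  -- Step 1: there is an eigenvalue < -1
  obtain ⟨α, β, γ, -, hrq⟩ := hray
  have hm : ∃ m, ev m < -1 := by
    by_contra hcon
    push_neg at hcon
    set v : Fin n → ℝ := fun p => if p = i then α else if p = j then β else if p = k then γ else 0
      with hv
    have hvi : v i = α := by simp [hv]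
    have hvj : v j = β := by simp [hv, hij.symm]
    have hvk : v k = γ := by simp [hv, hik.symm, hjk.symm]
    have hsum3 : ∀ f : Fin n → ℝ, (∀ p, p ≠ i → p ≠ j → p ≠ k → f p = 0) →
        ∑ p, f p = f i + f j + f k := by
      intro f hf
      have hsub : ({i, j, k} : Finset (Fin n)) ⊆ Finset.univ := Finset.subset_univ _
      rw [← Finset.sum_subset hsub (fun x _ hx => by
        simp only [Finset.mem_insert, Finset.mem_singleton, not_or] at hx
        exact hf x hx.1 hx.2.1 hx.2.2)]
      rw [Finset.sum_insert (by simp [hij, hik]), Finset.sum_insert (by simp [hjk]),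
        Finset.sum_singleton, add_assoc]
    have hRv : ∀ p, (R *ᵥ v) p = R p i * α + R p j * β + R p k * γ := by
      intro p
      show ∑ q, R p q * v q = _
      rw [hsum3 (fun q => R p q * v q) (fun q hqi hqj hqk => by simp [hv, hqi, hqj, hqk])]
      simp [hv, hij, hjk, hik, hij.symm, hjk.symm, hik.symm]
    have hvRv : v ⬝ᵥ (R *ᵥ v) = 2 * (R i j * α * β + R j k * β * γ + R i k * α * γ) := by
      show ∑ p, v p * (R *ᵥ v) p = _
      rw [hsum3 (fun p => v p * (R *ᵥ v) p) (fun p hpi hpj hpk => by simp [hv, hpi, hpj, hpk])]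
      rw [hRv i, hRv j, hRv k, hvi, hvj, hvk, hii, hjj, hkk, hsym j i, hsym k i, hsym k j]
      ring
    have hvv : v ⬝ᵥ v = α ^ 2 + β ^ 2 + γ ^ 2 := by
      show ∑ p, v p * v p = _
      rw [hsum3 (fun p => v p * v p) (fun p hpi hpj hpk => by simp [hv, hpi, hpj, hpk])]
      rw [hvi, hvj, hvk]
      ring
    have hs0 : 0 ≤ α ^ 2 + β ^ 2 + γ ^ 2 := by positivity
    have hs : 0 < α ^ 2 + β ^ 2 + γ ^ 2 := by
      rcases hs0.lt_or_eq with h | h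
      · exact h
      · rw [← h, div_zero] at hrq; linarith
    have hlt : v ⬝ᵥ (R *ᵥ v) < -1 * (v ⬝ᵥ v) := by
      rw [hvRv, hvv]
      rw [div_lt_iff₀ hs] at hrq
      linarith
    exact absurd (quad_lower hR hcon v) (not_le.mpr hlt)
  obtain ⟨m, hm⟩ := hm
  -- Step 2: ρ > 0
  have htr : (0 : ℝ) ≤ ∑ p, ev p := by
    rw [← trace_eq_sum_eig hR]
    exact Finset.sum_nonneg fun p _ => hnonneg p p
  have hub : ∀ p, ev p ≤ ρ := fun p => hρ.2 ⟨p, rfl⟩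
  have hρpos : 0 < ρ := by
    by_contra hc
    push_neg at hc
    have : ∑ p, ev p ≤ ∑ p, (if p = m then ev m else 0 : ℝ) := by
      refine Finset.sum_le_sum fun p _ => ?_
      by_cases hp : p = m
      · simp [hp]
      · simp [hp]; linarith [hub p]
    rw [Finset.sum_ite_eq' Finset.univ m (fun _ => ev m)] at this
    simp at this
    linarith
  obtain ⟨i0, hi0⟩ := hρ.1
  -- Setup of finsets
  set S : Finset (Fin n) := Finset.univ.filter (fun l => ev l ≠ 0) with hS
  have hi0S : i0 ∈ S := by
    simp only [hS, Finset.mem_filter, Finset.mem_univ, true_and]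
    rw [hi0]; exact ne_of_gt hρpos
  have hmS : m ∈ S := by
    simp only [hS, Finset.mem_filter, Finset.mem_univ, true_and]
    intro h; rw [h] at hm; linarith
  have hmi0 : m ≠ i0 := by
    intro h; rw [h, hi0] at hm; linarith
  set T : Finset (Fin n) := S.erase i0 with hT
  have hmT : m ∈ T := Finset.mem_erase.mpr ⟨hmi0, hmS⟩
  have hTpos : ∀ l ∈ T, 0 < |ev l| := by
    intro l hl
    have := (Finset.mem_erase.mp hl).2
    simp only [hS, Finset.mem_filter] at this
    exact abs_pos.mpr this.2
  -- cardinalities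
  have hcard : κ + S.card = n := by
    rw [hκ]
    have := Finset.card_filter_add_card_filter_not (s := (Finset.univ : Finset (Fin n)))
      (p := fun l => ev l = 0)
    simpa [Matrix.nullityEig, hS] using this
  have hTcard : T.card = S.card - 1 := Finset.card_erase_of_mem hi0S
  have hScard1 : 1 ≤ S.card := Finset.card_pos.mpr ⟨i0, hi0S⟩
  have hTcardR : (T.card : ℝ) = (n : ℝ) - κ - 1 := by
    have h1 : (S.card : ℝ) = (n : ℝ) - κ := by
      have := hcard; push_cast [← this]; ring
    rw [hTcard]
    push_cast [Nat.cast_sub hScard1]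
    rw [h1]
  -- energy decomposition
  have hE1 : R.energy hR = ∑ l ∈ S, |ev l| := by
    rw [Matrix.energy]
    rw [← Finset.sum_filter_of_ne (p := fun l => ev l ≠ 0)]
    intro x _ hx
    intro h
    exact hx (by rw [← hev, h]; exact abs_zero)
  have hE2 : ∑ l ∈ S, |ev l| = ρ + ∑ l ∈ T, |ev l| := by
    rw [hT, ← Finset.add_sum_erase S _ hi0S, hi0, abs_of_pos hρpos]
  -- strict inequality over T
  have hstrict : ∑ l ∈ T, (1 + Real.log |ev l|) < ∑ l ∈ T, |ev l| := by
    refine Finset.sum_lt_sum (fun l hl => ?_) ⟨m, hmT, ?_⟩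
    · have := Real.log_le_sub_one_of_pos (hTpos l hl)
      linarith
    · have h1 : 1 < |ev m| := by
        rw [abs_of_neg (by linarith : ev m < 0)]; linarith
      have := Real.log_lt_sub_one_of_pos (by linarith : (0:ℝ) < |ev m|) (by linarith)
      linarith
  have hsplit : ∑ l ∈ T, (1 + Real.log |ev l|) = (T.card : ℝ) + ∑ l ∈ T, Real.log |ev l| := by
    rw [Finset.sum_add_distrib, Finset.sum_const, nsmul_eq_mul, mul_one]
  -- log of product
  have hlogprod : Real.log |R.prodNonzeroEig hR| = ∑ l ∈ S, Real.log |ev l| := by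
    rw [Matrix.prodNonzeroEig, ← hS, Finset.abs_prod, Real.log_prod]
    intro x hx
    simp only [hS, Finset.mem_filter] at hx
    exact abs_ne_zero.mpr hx.2
  have hlogsplit : ∑ l ∈ S, Real.log |ev l| = Real.log ρ + ∑ l ∈ T, Real.log |ev l| := by
    rw [hT, ← Finset.add_sum_erase S _ hi0S, hi0, abs_of_pos hρpos]
  -- assemble
  rw [hE1, hE2, hlogprod, hlogsplit, ← hTcardR]
  have := hstrict
  rw [hsplit] at this
  linarith
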